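/- Let V be a real inner product space with norm ‖·‖, let τ > 0 and T_fin > 0, let K : ℕ → V be a sequence, and let m ≥ 2 be an even integer with m·τ ≤ T_fin. Then ‖K_m‖² ≤ 2‖K₀‖² + 4·T_fin·τ·Σ_{n=1}^{m−1} ‖(K_{n+1} − K_{n−1})/(2τ)‖². -/

import Mathlib

open scoped RealInnerProductSpace

/-- The telescoping bound for the source terms at even indices:
`‖K_m‖² ≤ 2‖K₀‖² + 4 T τ Σ_{n=1}^{m−1} ‖δ_{2τ}K_n‖²`. -/
theorem source_telescoping_bound_even
    {V : Type*} [NormedAddCommGroup V] [InnerProductSpace ℝ V]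
    (τ Tfin : ℝ) (hτ : 0 < τ) (hTfin : 0 < Tfin)
    (K : ℕ → V) (m : ℕ) (hm : 2 ≤ m) (hmeven : Even m) (hmτ : (m : ℝ) * τ ≤ Tfin) :
    ‖K m‖^2 ≤ 2 * ‖K 0‖^2
      + 4 * Tfin * τ * ∑ n ∈ Finset.Icc 1 (m-1), ‖(2*τ)⁻¹ • (K (n+1) - K (n-1))‖^2 := by
  obtain ⟨N, hN⟩ := hmeven
  have hNpos : 1 ≤ N := by omega
  set b : ℕ → ℝ := fun n => ‖(2*τ)⁻¹ • (K (n+1) - K (n-1))‖^2 with hb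
  set a : ℕ → ℝ := fun j => ‖K (2*j+2) - K (2*j)‖ with ha
  -- telescoping
  have htel : K m - K 0 = ∑ j ∈ Finset.range N, (K (2*(j+1)) - K (2*j)) := by
    rw [Finset.sum_range_sub (fun j => K (2*j))]
    congr 2
    omega
  set S : ℝ := ∑ j ∈ Finset.range N, a j with hS
  have hSnn : 0 ≤ S := Finset.sum_nonneg fun j _ => norm_nonneg _
  have h1 : ‖K m‖ ≤ ‖K 0‖ + S := by
    have : ‖K m‖ ≤ ‖K 0‖ + ‖K m - K 0‖ := by
      calc ‖K m‖ = ‖K 0 + (K m - K 0)‖ := by rw [add_sub_cancel]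
        _ ≤ ‖K 0‖ + ‖K m - K 0‖ := norm_add_le _ _
    refine this.trans (add_le_add_right ?_ _)
    rw [htel]
    refine (norm_sum_le _ _).trans (le_of_eq ?_)
    refine Finset.sum_congr rfl fun j _ => ?_
    simp [ha]
    ring_nf
  -- Cauchy-Schwarz
  have hCS : S^2 ≤ (N : ℝ) * ∑ j ∈ Finset.range N, (a j)^2 := by
    simpa using sq_sum_le_card_mul_sum_sq (s := Finset.range N) (f := a)
  -- relate a and b
  have hab : ∀ j, (a j)^2 = (2*τ)^2 * b (2*j+1) := by
    intro j
    have h2τ : (0:ℝ) < 2*τ := by linarith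
    simp only [ha, hb, norm_smul, norm_inv, Real.norm_eq_abs, abs_of_pos h2τ]
    have : (2*j+1+1) = 2*j+2 := by omega
    rw [this]
    have : (2*j+1-1) = 2*j := by omega
    rw [this]
    field_simp
  have hsum : ∑ j ∈ Finset.range N, (a j)^2
      = (2*τ)^2 * ∑ j ∈ Finset.range N, b (2*j+1) := by
    rw [Finset.mul_sum]; exact Finset.sum_congr rfl fun j _ => hab j
  -- odd-index sum is bounded by the full sum
  have hbnn : ∀ n, 0 ≤ b n := fun n => sq_nonneg _
  have hodd : ∑ j ∈ Finset.range N, b (2*j+1) ≤ ∑ n ∈ Finset.Icc 1 (m-1), b n := by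
    have hinj : ∀ x ∈ Finset.range N, ∀ y ∈ Finset.range N,
        2*x+1 = 2*y+1 → x = y := by intros; omega
    rw [← Finset.sum_image hinj]
    refine Finset.sum_le_sum_of_subset_of_nonneg ?_ (fun n _ _ => hbnn n)
    intro n hn
    simp only [Finset.mem_image, Finset.mem_range] at hn
    obtain ⟨j, hj, rfl⟩ := hn
    simp only [Finset.mem_Icc]
    omega
  -- put it together
  have hfull : 0 ≤ ∑ n ∈ Finset.Icc 1 (m-1), b n :=
    Finset.sum_nonneg fun n _ => hbnn n
  have hsq : ‖K m‖^2 ≤ (‖K 0‖ + S)^2 := by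
    have := pow_le_pow_left₀ (norm_nonneg (K m)) h1 2
    exact this
  have hm8 : 8 * (N:ℝ) * τ^2 ≤ 4 * Tfin * τ := by
    have : (m:ℝ) = 2 * N := by rw [hN]; push_cast; ring
    nlinarith
  nlinarith [sq_nonneg (‖K 0‖ - S), sq_nonneg S, norm_nonneg (K 0),
    mul_le_mul_of_nonneg_left hodd (by positivity : (0:ℝ) ≤ 8 * N * τ^2),
    mul_le_mul_of_nonneg_right hm8 hfull]
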